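/- Weierstrass-Hironaka formal division: Let K be a field, T̄ a total positive monomial order on ℕ^n, and f_1,…,f_k ∈ K[[u_1,…,u_n, v_1,…,v_m]] formal power series such that the initial exponents α_i := exp_{T̄}(f_i(u,0)) ∈ ℕ^n exist. Let Δ = ⋃ Δ_i be the associated decomposition of ℕ^n into Γ ∪ Δ_1 ∪ … ∪ Δ_k with Δ_i = α_i + Γ_i. Then for every g ∈ K[[u,v]] there exist unique h_i, r ∈ K[[u,v]] with supp(h_i) ⊆ Γ_i × ℕ^m, supp(r) ⊆ Γ × ℕ^m, and g = Σ h_i f_i + r. -/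

import Mathlib

/-- The value `T̄(a) ∈ ℝ^r` of the tuple of linear forms with coefficient
matrix `c` at `a ∈ ℕ^n`. -/
def tvec {n r : ℕ} (c : Fin r → Fin n → ℝ) (a : Fin n →₀ ℕ) : Fin r → ℝ :=
  fun i => ∑ j, c i j * (a j : ℝ)

/-- The translated quadrant `v + ℕ^n`. -/
def quad {n : ℕ} (v : Fin n →₀ ℕ) : Set (Fin n →₀ ℕ) := {b | ∃ g, b = v + g}

/-- `Δ_i = (α_i + ℕ^n) \ ⋃_{j<i} (α_j + ℕ^n)`. -/
def deltaI {n k : ℕ} (α : Fin k → (Fin n →₀ ℕ)) (i : Fin k) : Set (Fin n →₀ ℕ) :=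
  quad (α i) \ ⋃ (j : Fin k) (_ : j < i), quad (α j)

/-- `Γ = ℕ^n \ ⋃_i (α_i + ℕ^n)`. -/
def gammaSet {n k : ℕ} (α : Fin k → (Fin n →₀ ℕ)) : Set (Fin n →₀ ℕ) :=
  (⋃ i : Fin k, quad (α i))ᶜ

/-- `Γ_i = Δ_i − α_i`. -/
def gammaI {n k : ℕ} (α : Fin k → (Fin n →₀ ℕ)) (i : Fin k) : Set (Fin n →₀ ℕ) :=
  {g | α i + g ∈ deltaI α i}

/-- The inclusion `ℕ^n ⊆ ℕ^n × ℕ^m` of exponents (extension by zero on the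
`v`-variables). -/
noncomputable def inclU {n m : ℕ} (a : Fin n →₀ ℕ) : (Fin n ⊕ Fin m) →₀ ℕ :=
  a.mapDomain Sum.inl

/-- The projection `ℕ^n × ℕ^m → ℕ^n` of exponents onto the `u`-part. -/
noncomputable def projU {n m : ℕ} (d : (Fin n ⊕ Fin m) →₀ ℕ) : Fin n →₀ ℕ :=
  d.comapDomain Sum.inl Sum.inl_injective.injOn


open Finsupp

lemma tvec_add {n r : ℕ} (c : Fin r → Fin n → ℝ) (a b : Fin n →₀ ℕ) :
    tvec c (a + b) = tvec c a + tvec c b := by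
  funext i
  simp only [tvec, Pi.add_apply, Finsupp.add_apply, ← Finset.sum_add_distrib]
  congr 1; funext j; push_cast; ring

lemma lex_lt_def {r : ℕ} (x y : Fin r → ℝ) :
    toLex x < toLex y ↔ ∃ i, (∀ j, j < i → x j = y j) ∧ x i < y i := Iff.rfl

lemma lex_lt_add_left {r : ℕ} (x a b : Fin r → ℝ) (h : toLex a < toLex b) :
    toLex (x + a) < toLex (x + b) := by
  rw [lex_lt_def] at h ⊢
  obtain ⟨i, hji, hi⟩ := h
  exact ⟨i, fun j hj => by simp [Pi.add_apply, hji j hj], by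
    simpa [Pi.add_apply] using add_lt_add_left hi (x i)⟩

lemma tvec_lt_of_le_of_ne {n r : ℕ} (c : Fin r → Fin n → ℝ)
    (hnonneg : ∀ i j, 0 ≤ c i j)
    (hpos : ∀ a : Fin n → ℕ, a ≠ 0 → ∃ i, 0 < ∑ j, c i j * (a j : ℝ))
    {a b : Fin n →₀ ℕ} (hle : a ≤ b) (hne : a ≠ b) :
    toLex (tvec c a) < toLex (tvec c b) := by
  -- difference as a plain function
  set δ : Fin n → ℕ := fun j => b j - a j with hδ
  have hab : ∀ j, a j ≤ b j := fun j => Finsupp.le_def.mp hle j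
  have hδ0 : δ ≠ 0 := by
    intro h0
    apply hne
    ext j
    have h1 := congrFun h0 j
    simp only [δ, Pi.zero_apply] at h1
    have h2 := hab j
    omega
  have hdiff : ∀ i, tvec c b i = tvec c a i + ∑ j, c i j * (δ j : ℝ) := by
    intro i
    simp only [tvec, ← Finset.sum_add_distrib]
    refine Finset.sum_congr rfl fun j _ => ?_
    have hnat : b j = a j + δ j := by
      have := hab j
      simp only [δ]
      omega
    rw [hnat]
    push_cast
    ring
  have hnn : ∀ i, 0 ≤ ∑ j, c i j * (δ j : ℝ) := fun i =>
    Finset.sum_nonneg fun j _ => mul_nonneg (hnonneg i j) (Nat.cast_nonneg _)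
  obtain ⟨i₀, hi₀⟩ := hpos δ hδ0
  -- take the least index with positive increment
  classical
  have hset : (Finset.univ.filter fun i => 0 < ∑ j, c i j * (δ j : ℝ)).Nonempty :=
    ⟨i₀, Finset.mem_filter.mpr ⟨Finset.mem_univ _, hi₀⟩⟩
  set i₁ := (Finset.univ.filter fun i => 0 < ∑ j, c i j * (δ j : ℝ)).min' hset with hi₁def
  have hi₁mem := (Finset.univ.filter fun i => 0 < ∑ j, c i j * (δ j : ℝ)).min'_mem hset
  rw [Finset.mem_filter] at hi₁mem
  rw [lex_lt_def]
  refine ⟨i₁, fun j hj => ?_, ?_⟩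
  · have : ¬ 0 < ∑ l, c j l * (δ l : ℝ) := by
      intro hpos'
      have hjmem : j ∈ Finset.univ.filter fun i => 0 < ∑ l, c i l * (δ l : ℝ) :=
        Finset.mem_filter.mpr ⟨Finset.mem_univ j, hpos'⟩
      have := Finset.min'_le _ j hjmem
      rw [← hi₁def] at this
      exact absurd hj (not_lt.mpr this)
    have : (∑ l, c j l * (δ l : ℝ)) = 0 := le_antisymm (not_lt.mp this) (hnn j)
    rw [hdiff j, this, add_zero]
  · rw [hdiff i₁]
    linarith [hi₁mem.2]

section WH
open MvPowerSeries Finsupp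

/-- Basic projection/inclusion lemmas. -/
lemma inclU_apply_inl {n m : ℕ} (a : Fin n →₀ ℕ) (x : Fin n) :
    (inclU a : (Fin n ⊕ Fin m) →₀ ℕ) (Sum.inl x) = a x :=
  Finsupp.mapDomain_apply Sum.inl_injective a x

lemma inclU_apply_inr {n m : ℕ} (a : Fin n →₀ ℕ) (y : Fin m) :
    (inclU a : (Fin n ⊕ Fin m) →₀ ℕ) (Sum.inr y) = 0 :=
  Finsupp.mapDomain_notin_range a _ (by simp)

lemma projU_apply {n m : ℕ} (d : (Fin n ⊕ Fin m) →₀ ℕ) (x : Fin n) :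
    projU d x = d (Sum.inl x) := rfl

lemma projU_inclU {n m : ℕ} (a : Fin n →₀ ℕ) :
    projU (inclU a : (Fin n ⊕ Fin m) →₀ ℕ) = a := by
  ext x; rw [projU_apply, inclU_apply_inl]

lemma projU_add {n m : ℕ} (d e : (Fin n ⊕ Fin m) →₀ ℕ) :
    projU (d + e) = projU d + projU e := by
  ext x; simp [projU_apply]

lemma projU_tsub {n m : ℕ} (d e : (Fin n ⊕ Fin m) →₀ ℕ) :
    projU (d - e) = projU d - projU e := by
  ext x; simp [projU_apply, Finsupp.tsub_apply]

lemma inclU_injective {n m : ℕ} :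
    Function.Injective (inclU : (Fin n →₀ ℕ) → (Fin n ⊕ Fin m) →₀ ℕ) :=
  Finsupp.mapDomain_injective Sum.inl_injective

lemma eq_inclU_of_vzero {n m : ℕ} (s : (Fin n ⊕ Fin m) →₀ ℕ)
    (h : ∀ j, s (Sum.inr j) = 0) : s = inclU (projU s) := by
  ext z
  cases z with
  | inl x => rw [inclU_apply_inl, projU_apply]
  | inr y => rw [inclU_apply_inr]; exact h y

/-- v-degree. -/
def vdeg {n m : ℕ} (d : (Fin n ⊕ Fin m) →₀ ℕ) : ℕ := ∑ j : Fin m, d (Sum.inr j)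

lemma vdeg_add {n m : ℕ} (d e : (Fin n ⊕ Fin m) →₀ ℕ) :
    vdeg (d + e) = vdeg d + vdeg e := by
  simp [vdeg, Finset.sum_add_distrib]

lemma vdeg_inclU {n m : ℕ} (a : Fin n →₀ ℕ) :
    vdeg (inclU a : (Fin n ⊕ Fin m) →₀ ℕ) = 0 := by
  simp [vdeg, inclU_apply_inr]

/-- The well-founded relation used in the division algorithm. -/
def Dlt {n m r : ℕ} (c : Fin r → Fin n → ℝ)
    (d' d : (Fin n ⊕ Fin m) →₀ ℕ) : Prop :=
  Prod.Lex (· < ·) (fun a b : Fin n →₀ ℕ => toLex (tvec c a) < toLex (tvec c b))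
    (vdeg d', projU d') (vdeg d, projU d)

lemma tlt_wf {n r : ℕ} (c : Fin r → Fin n → ℝ)
    (hnonneg : ∀ i j, 0 ≤ c i j)
    (hpos : ∀ a : Fin n → ℕ, a ≠ 0 → ∃ i, 0 < ∑ j, c i j * (a j : ℝ)) :
    WellFounded (fun a b : Fin n →₀ ℕ => toLex (tvec c a) < toLex (tvec c b)) := by
  haveI : IsStrictOrder (Fin n →₀ ℕ) (fun a b => toLex (tvec c a) < toLex (tvec c b)) :=
    { irrefl := fun a => lt_irrefl _,
      trans := fun a b d hab hbd => lt_trans hab hbd }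
  rw [RelEmbedding.wellFounded_iff_isEmpty]
  constructor
  intro e
  obtain ⟨i, j, hij, hle⟩ :=
    Set.isPWO_of_wellQuasiOrderedLE (Set.univ : Set (Fin n →₀ ℕ)) (fun t => ⟨e t, Set.mem_univ _⟩)
  have hlt : toLex (tvec c (e j)) < toLex (tvec c (e i)) := e.map_rel_iff.mpr hij
  rcases eq_or_ne (e i) (e j) with h | h
  · rw [h] at hlt; exact lt_irrefl _ hlt
  · exact lt_asymm hlt (tvec_lt_of_le_of_ne c hnonneg hpos hle h)

lemma dlt_wf {n m r : ℕ} (c : Fin r → Fin n → ℝ)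
    (hnonneg : ∀ i j, 0 ≤ c i j)
    (hpos : ∀ a : Fin n → ℕ, a ≠ 0 → ∃ i, 0 < ∑ j, c i j * (a j : ℝ)) :
    WellFounded (Dlt (n := n) (m := m) c) :=
  InvImage.wf (fun d => (vdeg d, projU d))
    (WellFounded.prod_lex (wellFounded_lt) (tlt_wf c hnonneg hpos))

/-- Descent: each non-leading term of `f i` pushes exponents strictly down. -/
lemma descent {n m r : ℕ} (c : Fin r → Fin n → ℝ)
    {K : Type*} [Field K] (F : MvPowerSeries (Fin n ⊕ Fin m) K) (a : Fin n →₀ ℕ)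
    (hord : ∀ b : Fin n →₀ ℕ, MvPowerSeries.coeff (inclU b) F ≠ 0 → b ≠ a →
      toLex (tvec c a) < toLex (tvec c b))
    (e s d : (Fin n ⊕ Fin m) →₀ ℕ) (hes : e + s = d)
    (hf : MvPowerSeries.coeff s F ≠ 0) (hs : s ≠ inclU a) :
    Dlt c (e + inclU a) d := by
  unfold Dlt
  by_cases hv : ∀ j, s (Sum.inr j) = 0
  · -- no v-part: use the order on the u-part
    have hsb : s = inclU (projU s) := eq_inclU_of_vzero s hv
    have hvs : vdeg s = 0 := by rw [hsb, vdeg_inclU]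
    have hveq : vdeg (e + inclU a) = vdeg d := by
      rw [← hes, vdeg_add, vdeg_add, vdeg_inclU, hvs]
    have hbne : projU s ≠ a := by
      intro hba; apply hs; rw [hsb, hba]
    have hlt : toLex (tvec c a) < toLex (tvec c (projU s)) :=
      hord (projU s) (by rwa [← hsb]) hbne
    have hproj : projU d = projU e + projU s := by rw [← hes, projU_add]
    have hproj' : projU (e + inclU a) = projU e + a := by rw [projU_add, projU_inclU]
    rw [hveq, hproj, hproj']
    apply Prod.Lex.right
    rw [tvec_add, tvec_add]
    exact lex_lt_add_left _ _ _ hlt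
  · -- nonzero v-part: the v-degree drops
    push_neg at hv
    obtain ⟨j, hj⟩ := hv
    have hvs : 0 < vdeg s := by
      have : s (Sum.inr j) ≤ vdeg s :=
        Finset.single_le_sum (f := fun j => s (Sum.inr j)) (fun _ _ => Nat.zero_le _)
          (Finset.mem_univ j)
      omega
    have : vdeg (e + inclU a) < vdeg d := by
      rw [← hes, vdeg_add, vdeg_add, vdeg_inclU]
      omega
    exact Prod.Lex.left _ _ this

/-- Region trichotomy. -/
lemma region_cases {n k : ℕ} (α : Fin k → (Fin n →₀ ℕ)) (p : Fin n →₀ ℕ) :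
    p ∈ gammaSet α ∨ ∃ i, p ∈ deltaI α i := by
  classical
  by_cases h : p ∈ gammaSet α
  · exact Or.inl h
  · right
    rw [gammaSet, Set.notMem_compl_iff, Set.mem_iUnion] at h
    have hne : (Finset.univ.filter fun i => p ∈ quad (α i)).Nonempty := by
      obtain ⟨i, hi⟩ := h
      exact ⟨i, Finset.mem_filter.mpr ⟨Finset.mem_univ i, hi⟩⟩
    set i₀ := (Finset.univ.filter fun i => p ∈ quad (α i)).min' hne with hi₀def
    have hmem := Finset.min'_mem _ hne
    rw [← hi₀def, Finset.mem_filter] at hmem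
    refine ⟨i₀, hmem.2, ?_⟩
    intro hmem'
    rw [Set.mem_iUnion] at hmem'
    obtain ⟨j, hj⟩ := hmem'
    rw [Set.mem_iUnion] at hj
    obtain ⟨hji, hjq⟩ := hj
    have : i₀ ≤ j := Finset.min'_le _ j (Finset.mem_filter.mpr ⟨Finset.mem_univ j, hjq⟩)
    exact absurd hji (not_lt.mpr this)

lemma delta_subset_quad {n k : ℕ} (α : Fin k → (Fin n →₀ ℕ)) (i : Fin k) :
    deltaI α i ⊆ quad (α i) := fun _ h => h.1

lemma delta_disjoint {n k : ℕ} (α : Fin k → (Fin n →₀ ℕ)) {i j : Fin k}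
    {p : Fin n →₀ ℕ} (hi : p ∈ deltaI α i) (hj : p ∈ deltaI α j) : i = j := by
  by_contra hne
  rcases lt_or_gt_of_ne hne with h | h
  · exact hj.2 (Set.mem_iUnion.mpr ⟨i, Set.mem_iUnion.mpr ⟨h, hi.1⟩⟩)
  · exact hi.2 (Set.mem_iUnion.mpr ⟨j, Set.mem_iUnion.mpr ⟨h, hj.1⟩⟩)

lemma not_gamma_of_delta {n k : ℕ} (α : Fin k → (Fin n →₀ ℕ)) {i : Fin k}
    {p : Fin n →₀ ℕ} (hi : p ∈ deltaI α i) : p ∉ gammaSet α := by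
  intro hg
  exact hg (Set.mem_iUnion.mpr ⟨i, hi.1⟩)

/-- If `projU d ∈ Δ_i` then the leading exponent divides `d`. -/
lemma delta_le {n m k : ℕ} (α : Fin k → (Fin n →₀ ℕ)) {i : Fin k}
    {d : (Fin n ⊕ Fin m) →₀ ℕ} (hd : projU d ∈ deltaI α i) :
    inclU (α i) ≤ d := by
  obtain ⟨γ, hγ⟩ := hd.1
  rw [Finsupp.le_def]
  intro z
  cases z with
  | inl x =>
      rw [inclU_apply_inl]
      have : projU d x = α i x + γ x := by rw [hγ, Finsupp.add_apply]
      rw [← projU_apply d x, this]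
      exact Nat.le_add_right _ _
  | inr y => rw [inclU_apply_inr]; exact Nat.zero_le _

lemma delta_gammaI {n m k : ℕ} (α : Fin k → (Fin n →₀ ℕ)) {i : Fin k}
    {d : (Fin n ⊕ Fin m) →₀ ℕ} (hd : projU d ∈ deltaI α i) :
    projU (d - inclU (α i)) ∈ gammaI α i := by
  have hle : inclU (α i) ≤ d := delta_le α hd
  have hle' : α i ≤ projU d := by
    rw [Finsupp.le_def]; intro x
    rw [← inclU_apply_inl (m := m) (α i) x, ← projU_apply]
    exact Finsupp.le_def.mp hle _
  show α i + projU (d - inclU (α i)) ∈ deltaI α i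
  rw [projU_tsub, projU_inclU]
  rwa [add_tsub_cancel_of_le hle']

lemma gammaI_delta {n m k : ℕ} (α : Fin k → (Fin n →₀ ℕ)) {i : Fin k}
    {e d : (Fin n ⊕ Fin m) →₀ ℕ} (hed : e + inclU (α i) = d)
    (he : projU e ∈ gammaI α i) : projU d ∈ deltaI α i := by
  have h1 : α i + projU e ∈ deltaI α i := he
  subst hed
  rw [projU_add, projU_inclU, add_comm (projU e) (α i)]
  exact h1

end WH

section WH2
open MvPowerSeries Finsupp

variable {K : Type*} [Field K] {n m k r : ℕ}

open scoped Classical in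
/-- The solution coefficients, defined by well-founded recursion. -/
noncomputable def WHX (c : Fin r → Fin n → ℝ)
    (f : Fin k → MvPowerSeries (Fin n ⊕ Fin m) K) (α : Fin k → (Fin n →₀ ℕ))
    (g : MvPowerSeries (Fin n ⊕ Fin m) K)
    (hwf : WellFounded (Dlt (n := n) (m := m) c))
    (hdesc : ∀ (i : Fin k) (e s d : (Fin n ⊕ Fin m) →₀ ℕ), e + s = d →
      MvPowerSeries.coeff s (f i) ≠ 0 → s ≠ inclU (α i) → Dlt c (e + inclU (α i)) d) :
    ((Fin n ⊕ Fin m) →₀ ℕ) → K :=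
  hwf.fix fun d rec =>
    MvPowerSeries.coeff d g - ∑ i : Fin k, ∑ p ∈ Finset.HasAntidiagonal.antidiagonal d,
      if hc : p.1 + p.2 = d ∧ MvPowerSeries.coeff p.2 (f i) ≠ 0 ∧ p.2 ≠ inclU (α i) then
        (if projU p.1 ∈ gammaI α i then
            rec (p.1 + inclU (α i)) (hdesc i p.1 p.2 d hc.1 hc.2.1 hc.2.2) *
              (MvPowerSeries.coeff (inclU (α i)) (f i))⁻¹
          else 0) * MvPowerSeries.coeff p.2 (f i)
      else 0

open scoped Classical in
lemma WHX_eq (c : Fin r → Fin n → ℝ)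
    (f : Fin k → MvPowerSeries (Fin n ⊕ Fin m) K) (α : Fin k → (Fin n →₀ ℕ))
    (g : MvPowerSeries (Fin n ⊕ Fin m) K)
    (hwf : WellFounded (Dlt (n := n) (m := m) c))
    (hdesc : ∀ (i : Fin k) (e s d : (Fin n ⊕ Fin m) →₀ ℕ), e + s = d →
      MvPowerSeries.coeff s (f i) ≠ 0 → s ≠ inclU (α i) → Dlt c (e + inclU (α i)) d)
    (d : (Fin n ⊕ Fin m) →₀ ℕ) :
    WHX c f α g hwf hdesc d =
      MvPowerSeries.coeff d g - ∑ i : Fin k, ∑ p ∈ Finset.HasAntidiagonal.antidiagonal d,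
        if p.1 + p.2 = d ∧ MvPowerSeries.coeff p.2 (f i) ≠ 0 ∧ p.2 ≠ inclU (α i) then
          (if projU p.1 ∈ gammaI α i then
              WHX c f α g hwf hdesc (p.1 + inclU (α i)) *
                (MvPowerSeries.coeff (inclU (α i)) (f i))⁻¹
            else 0) * MvPowerSeries.coeff p.2 (f i)
        else 0 := by
  conv_lhs => rw [WHX, WellFounded.fix_eq]
  rw [← WHX]
  congr 1
  exact hdesc

/-- Splitting the product coefficient into the diagonal term and the rest. -/
lemma coeff_mul_split (w F : MvPowerSeries (Fin n ⊕ Fin m) K)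
    (β d : (Fin n ⊕ Fin m) →₀ ℕ) :
    MvPowerSeries.coeff d (w * F) =
      (if β ≤ d then
          MvPowerSeries.coeff (d - β) w * MvPowerSeries.coeff β F
        else 0) +
      ∑ p ∈ Finset.HasAntidiagonal.antidiagonal d,
        if p.2 ≠ β then MvPowerSeries.coeff p.1 w * MvPowerSeries.coeff p.2 F else 0 := by
  classical
  rw [MvPowerSeries.coeff_mul]
  have hsplit : ∀ p ∈ Finset.HasAntidiagonal.antidiagonal d,
      MvPowerSeries.coeff p.1 w * MvPowerSeries.coeff p.2 F =
        (if p.2 = β then MvPowerSeries.coeff p.1 w * MvPowerSeries.coeff p.2 F else 0) +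
        (if p.2 ≠ β then MvPowerSeries.coeff p.1 w * MvPowerSeries.coeff p.2 F else 0) := by
    intro p _
    by_cases hp : p.2 = β <;> simp [hp]
  rw [Finset.sum_congr rfl hsplit, Finset.sum_add_distrib]
  congr 1
  by_cases hβ : β ≤ d
  · rw [if_pos hβ]
    refine (Finset.sum_eq_single (d - β, β) ?_ ?_).trans ?_
    · intro p hp hne
      rw [Finset.HasAntidiagonal.mem_antidiagonal] at hp
      by_cases hp2 : p.2 = β
      · exfalso
        apply hne
        have h1 : p.1 = d - β := by
          rw [← hp, hp2, add_tsub_cancel_right]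
        rw [Prod.ext_iff]
        exact ⟨h1, hp2⟩
      · rw [if_neg hp2]
    · intro hmem
      exfalso
      apply hmem
      rw [Finset.HasAntidiagonal.mem_antidiagonal]
      exact tsub_add_cancel_of_le hβ
    · simp
  · rw [if_neg hβ]
    refine Finset.sum_eq_zero fun p hp => ?_
    rw [Finset.HasAntidiagonal.mem_antidiagonal] at hp
    have hne : p.2 ≠ β := by
      intro h
      apply hβ
      rw [← hp, h]
      exact le_add_self
    rw [if_neg hne]

end WH2

section WH3
open MvPowerSeries Finsupp

variable {K : Type*} [Field K] {n m k r : ℕ}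

lemma WH_unique_zero (c : Fin r → Fin n → ℝ)
    (hnonneg : ∀ i j, 0 ≤ c i j)
    (hpos : ∀ a : Fin n → ℕ, a ≠ 0 → ∃ i, 0 < ∑ j, c i j * (a j : ℝ))
    (f : Fin k → MvPowerSeries (Fin n ⊕ Fin m) K) (α : Fin k → (Fin n →₀ ℕ))
    (hC : ∀ i, MvPowerSeries.coeff (inclU (α i)) (f i) ≠ 0)
    (hdesc : ∀ (i : Fin k) (e s d : (Fin n ⊕ Fin m) →₀ ℕ), e + s = d →
      MvPowerSeries.coeff s (f i) ≠ 0 → s ≠ inclU (α i) → Dlt c (e + inclU (α i)) d)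
    (h' : Fin k → MvPowerSeries (Fin n ⊕ Fin m) K)
    (r' : MvPowerSeries (Fin n ⊕ Fin m) K)
    (hh' : ∀ i d, MvPowerSeries.coeff d (h' i) ≠ 0 → projU d ∈ gammaI α i)
    (hr' : ∀ d, MvPowerSeries.coeff d r' ≠ 0 → projU d ∈ gammaSet α)
    (heq : (∑ i, h' i * f i) + r' = 0) :
    ∀ d, MvPowerSeries.coeff d r' = 0 ∧
      ∀ i e, e + inclU (α i) = d → MvPowerSeries.coeff e (h' i) = 0 := by
  classical
  have hwf := dlt_wf (n := n) (m := m) c hnonneg hpos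
  intro d
  refine WellFounded.induction hwf
    (C := fun d => MvPowerSeries.coeff d r' = 0 ∧
      ∀ i e, e + inclU (α i) = d → MvPowerSeries.coeff e (h' i) = 0) d ?_
  intro d ih
  have h0 : MvPowerSeries.coeff d ((∑ i, h' i * f i) + r') = 0 := by rw [heq]; simp
  rw [map_add, map_sum,
    Finset.sum_congr rfl (fun i _ => coeff_mul_split (h' i) (f i) (inclU (α i)) d),
    Finset.sum_add_distrib] at h0
  have hrest0 : ∀ i ∈ Finset.univ, (∑ p ∈ Finset.HasAntidiagonal.antidiagonal d,
      if p.2 ≠ inclU (α i) then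
        MvPowerSeries.coeff p.1 (h' i) * MvPowerSeries.coeff p.2 (f i) else 0) = 0 := by
    intro i _
    refine Finset.sum_eq_zero fun p hp => ?_
    rw [Finset.HasAntidiagonal.mem_antidiagonal] at hp
    by_cases h1 : p.2 ≠ inclU (α i)
    · rw [if_pos h1]
      by_cases h2 : MvPowerSeries.coeff p.2 (f i) = 0
      · rw [h2, mul_zero]
      · have hD := hdesc i p.1 p.2 d hp h2 h1
        rw [(ih _ hD).2 i p.1 rfl, zero_mul]
    · rw [if_neg h1]
  rw [Finset.sum_eq_zero hrest0, add_zero] at h0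
  rcases region_cases α (projU d) with hΓ | ⟨i₀, hΔ⟩
  · have hdiag0 : ∀ i ∈ Finset.univ, (if inclU (α i) ≤ d then
        MvPowerSeries.coeff (d - inclU (α i)) (h' i) *
          MvPowerSeries.coeff (inclU (α i)) (f i) else 0) = 0 := by
      intro i _
      by_cases h1 : inclU (α i) ≤ d
      · rw [if_pos h1]
        by_cases h2 : MvPowerSeries.coeff (d - inclU (α i)) (h' i) = 0
        · rw [h2, zero_mul]
        · exfalso
          exact not_gamma_of_delta α
            (gammaI_delta α (tsub_add_cancel_of_le h1) (hh' i _ h2)) hΓ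
      · rw [if_neg h1]
    rw [Finset.sum_eq_zero hdiag0, zero_add] at h0
    refine ⟨h0, ?_⟩
    intro i e he
    by_contra hne
    exact not_gamma_of_delta α (gammaI_delta α he (hh' i e hne)) hΓ
  · have hrd : MvPowerSeries.coeff d r' = 0 := by
      by_contra hne
      exact not_gamma_of_delta α hΔ (hr' d hne)
    rw [hrd, add_zero] at h0
    have hsingle : (∑ i : Fin k, if inclU (α i) ≤ d then
        MvPowerSeries.coeff (d - inclU (α i)) (h' i) *
          MvPowerSeries.coeff (inclU (α i)) (f i) else 0) =
        MvPowerSeries.coeff (d - inclU (α i₀)) (h' i₀) *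
          MvPowerSeries.coeff (inclU (α i₀)) (f i₀) := by
      refine (Finset.sum_eq_single i₀ ?_ ?_).trans ?_
      · intro i _ hii
        by_cases h1 : inclU (α i) ≤ d
        · rw [if_pos h1]
          by_cases h2 : MvPowerSeries.coeff (d - inclU (α i)) (h' i) = 0
          · rw [h2, zero_mul]
          · exact absurd
              (delta_disjoint α (gammaI_delta α (tsub_add_cancel_of_le h1) (hh' i _ h2)) hΔ) hii
        · rw [if_neg h1]
      · intro hmem; exact absurd (Finset.mem_univ i₀) hmem
      · rw [if_pos (delta_le α hΔ)]
    rw [hsingle] at h0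
    have hcoeff0 : MvPowerSeries.coeff (d - inclU (α i₀)) (h' i₀) = 0 := by
      rcases mul_eq_zero.mp h0 with h | h
      · exact h
      · exact absurd h (hC i₀)
    refine ⟨hrd, ?_⟩
    intro i e he
    by_cases hii : i = i₀
    · subst hii
      have he' : e = d - inclU (α i) := by rw [← he, add_tsub_cancel_right]
      rw [he']
      exact hcoeff0
    · by_contra hne
      exact hii (delta_disjoint α (gammaI_delta α he (hh' i e hne)) hΔ)

end WH3

/-- **Weierstrass–Hironaka formal division.**  Let `K` be a field and `T̄` a
total positive monomial order on `ℕ^n` (coefficient matrix `c`, nonnegative,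
positive, injective on `ℕ^n`).  Let `f_1,…,f_k ∈ K[[u,v]]` be formal power
series whose initial exponents `α_i = exp_{T̄}(f_i(u,0))` exist.  Then for every
`g ∈ K[[u,v]]` there exist unique `h_i` and `r` with `supp(h_i) ⊆ Γ_i × ℕ^m`,
`supp(r) ⊆ Γ × ℕ^m` and `g = Σ h_i f_i + r`. -/
theorem weierstrass_hironaka_formal_division {K : Type*} [Field K]
    {n m k r : ℕ} (c : Fin r → Fin n → ℝ)
    (hnonneg : ∀ i j, 0 ≤ c i j)
    (hpos : ∀ a : Fin n → ℕ, a ≠ 0 → ∃ i, 0 < ∑ j, c i j * (a j : ℝ))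
    (htotal : Function.Injective fun a : Fin n →₀ ℕ => tvec c a)
    (f : Fin k → MvPowerSeries (Fin n ⊕ Fin m) K)
    (α : Fin k → (Fin n →₀ ℕ))
    (hexp : ∀ i : Fin k,
      MvPowerSeries.coeff (inclU (α i)) (f i) ≠ 0 ∧
      ∀ b : Fin n →₀ ℕ, MvPowerSeries.coeff (inclU b) (f i) ≠ 0 → b ≠ α i →
        toLex (tvec c (α i)) < toLex (tvec c b))
    (g : MvPowerSeries (Fin n ⊕ Fin m) K) :
    ∃! hr : (Fin k → MvPowerSeries (Fin n ⊕ Fin m) K) ×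
        MvPowerSeries (Fin n ⊕ Fin m) K,
      (∀ i : Fin k, ∀ d, MvPowerSeries.coeff d (hr.1 i) ≠ 0 →
        projU d ∈ gammaI α i) ∧
      (∀ d, MvPowerSeries.coeff d hr.2 ≠ 0 → projU d ∈ gammaSet α) ∧
      g = (∑ i, hr.1 i * f i) + hr.2 := by
  classical
  have hwf := dlt_wf (n := n) (m := m) c hnonneg hpos
  have hdesc : ∀ (i : Fin k) (e s d : (Fin n ⊕ Fin m) →₀ ℕ), e + s = d →
      MvPowerSeries.coeff s (f i) ≠ 0 → s ≠ inclU (α i) → Dlt c (e + inclU (α i)) d :=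
    fun i => descent c (f i) (α i) (hexp i).2
  set X : ((Fin n ⊕ Fin m) →₀ ℕ) → K := WHX c f α g hwf hdesc with hXdef
  have hC : ∀ i, MvPowerSeries.coeff (inclU (α i)) (f i) ≠ 0 := fun i => (hexp i).1
  set Hs : Fin k → MvPowerSeries (Fin n ⊕ Fin m) K :=
    fun i => (fun e => if projU e ∈ gammaI α i then
      X (e + inclU (α i)) * (MvPowerSeries.coeff (inclU (α i)) (f i))⁻¹ else 0 :
      MvPowerSeries (Fin n ⊕ Fin m) K) with hHdef
  set Rs : MvPowerSeries (Fin n ⊕ Fin m) K :=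
    (fun d => if projU d ∈ gammaSet α then X d else 0 :
      MvPowerSeries (Fin n ⊕ Fin m) K) with hRdef
  have hHc : ∀ i e, MvPowerSeries.coeff e (Hs i) =
      if projU e ∈ gammaI α i then
        X (e + inclU (α i)) * (MvPowerSeries.coeff (inclU (α i)) (f i))⁻¹ else 0 := by
    intro i e
    rw [hHdef]
    rfl
  have hRc : ∀ d, MvPowerSeries.coeff d Rs =
      if projU d ∈ gammaSet α then X d else 0 := by
    intro d
    rw [hRdef]
    rfl
  -- support conditions for the constructed solution
  have hHsupp : ∀ i d, MvPowerSeries.coeff d (Hs i) ≠ 0 → projU d ∈ gammaI α i := by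
    intro i d hne
    rw [hHc] at hne
    by_cases h1 : projU d ∈ gammaI α i
    · exact h1
    · exact absurd (if_neg h1) hne
  have hRsupp : ∀ d, MvPowerSeries.coeff d Rs ≠ 0 → projU d ∈ gammaSet α := by
    intro d hne
    rw [hRc] at hne
    by_cases h1 : projU d ∈ gammaSet α
    · exact h1
    · exact absurd (if_neg h1) hne
  -- the key coefficient identity
  have key : ∀ d, MvPowerSeries.coeff d ((∑ i, Hs i * f i) + Rs) =
      MvPowerSeries.coeff d g := by
    intro d
    rw [map_add, map_sum,
      Finset.sum_congr rfl (fun i _ => coeff_mul_split (Hs i) (f i) (inclU (α i)) d),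
      Finset.sum_add_distrib]
    have hrest : (∑ i : Fin k, ∑ p ∈ Finset.HasAntidiagonal.antidiagonal d,
        if p.2 ≠ inclU (α i) then
          MvPowerSeries.coeff p.1 (Hs i) * MvPowerSeries.coeff p.2 (f i) else 0) =
        MvPowerSeries.coeff d g - X d := by
      have hx := WHX_eq c f α g hwf hdesc d
      rw [← hXdef] at hx
      have hsums : (∑ i : Fin k, ∑ p ∈ Finset.HasAntidiagonal.antidiagonal d,
          if p.2 ≠ inclU (α i) then
            MvPowerSeries.coeff p.1 (Hs i) * MvPowerSeries.coeff p.2 (f i) else 0) =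
          (∑ i : Fin k, ∑ p ∈ Finset.HasAntidiagonal.antidiagonal d,
            if p.1 + p.2 = d ∧ MvPowerSeries.coeff p.2 (f i) ≠ 0 ∧ p.2 ≠ inclU (α i) then
              (if projU p.1 ∈ gammaI α i then
                  X (p.1 + inclU (α i)) *
                    (MvPowerSeries.coeff (inclU (α i)) (f i))⁻¹
                else 0) * MvPowerSeries.coeff p.2 (f i)
            else 0) := by
        refine Finset.sum_congr rfl fun i _ => Finset.sum_congr rfl fun p hp => ?_
        rw [Finset.HasAntidiagonal.mem_antidiagonal] at hp
        by_cases h1 : p.2 ≠ inclU (α i)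
        · by_cases h2 : MvPowerSeries.coeff p.2 (f i) = 0
          · rw [if_pos h1, h2, mul_zero, if_neg (by tauto), ]
          · rw [if_pos h1, if_pos ⟨hp, h2, h1⟩, hHc]
        · rw [if_neg h1, if_neg (by tauto)]
      rw [hsums]
      rw [hx]
      ring
    have hdiag : (∑ i : Fin k, if inclU (α i) ≤ d then
        MvPowerSeries.coeff (d - inclU (α i)) (Hs i) *
          MvPowerSeries.coeff (inclU (α i)) (f i) else 0) +
        MvPowerSeries.coeff d Rs = X d := by
      rcases region_cases α (projU d) with hΓ | ⟨i₀, hΔ⟩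
      · have h0 : ∀ i ∈ Finset.univ, (if inclU (α i) ≤ d then
            MvPowerSeries.coeff (d - inclU (α i)) (Hs i) *
              MvPowerSeries.coeff (inclU (α i)) (f i) else 0) = 0 := by
          intro i _
          by_cases h1 : inclU (α i) ≤ d
          · rw [if_pos h1, hHc]
            by_cases h2 : projU (d - inclU (α i)) ∈ gammaI α i
            · exfalso
              exact not_gamma_of_delta α
                (gammaI_delta α (tsub_add_cancel_of_le h1) h2) hΓ
            · rw [if_neg h2, zero_mul]
          · rw [if_neg h1]
        rw [Finset.sum_eq_zero h0, hRc, if_pos hΓ, zero_add]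
      · have hng := not_gamma_of_delta α hΔ
        rw [hRc, if_neg hng, add_zero]
        refine (Finset.sum_eq_single i₀ ?_ ?_).trans ?_
        · intro i _ hii
          by_cases h1 : inclU (α i) ≤ d
          · rw [if_pos h1, hHc]
            by_cases h2 : projU (d - inclU (α i)) ∈ gammaI α i
            · exact absurd
                (delta_disjoint α (gammaI_delta α (tsub_add_cancel_of_le h1) h2) hΔ) hii
            · rw [if_neg h2, zero_mul]
          · rw [if_neg h1]
        · intro hmem; exact absurd (Finset.mem_univ i₀) hmem
        · have h1 : inclU (α i₀) ≤ d := delta_le α hΔ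
          have h2 : projU (d - inclU (α i₀)) ∈ gammaI α i₀ := delta_gammaI α hΔ
          rw [if_pos h1, hHc, if_pos h2, tsub_add_cancel_of_le h1, mul_assoc,
            inv_mul_cancel₀ (hC i₀), mul_one]
    rw [hrest]
    linear_combination hdiag
  refine ⟨⟨Hs, Rs⟩, ⟨hHsupp, hRsupp, ?_⟩, ?_⟩
  · exact (MvPowerSeries.ext fun d => key d).symm
  · rintro ⟨h', r'⟩ ⟨hh', hr', heq'⟩
    have heq2 : g = (∑ i, Hs i * f i) + Rs := (MvPowerSeries.ext fun d => key d).symm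
    have heq0 : (∑ i, (h' i - Hs i) * f i) + (r' - Rs) = 0 := by
      have hsum : (∑ i, (h' i - Hs i) * f i) =
          (∑ i, h' i * f i) - (∑ i, Hs i * f i) := by
        rw [← Finset.sum_sub_distrib]
        exact Finset.sum_congr rfl fun i _ => sub_mul _ _ _
      rw [hsum]
      have hgg := heq'.symm.trans heq2
      linear_combination hgg
    have hz := WH_unique_zero c hnonneg hpos f α hC hdesc
      (fun i => h' i - Hs i) (r' - Rs)
      (fun i d hd => by
        rw [map_sub] at hd
        by_cases h1 : MvPowerSeries.coeff d (h' i) = 0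
        · exact hHsupp i d (by intro h2; rw [h1, h2, sub_zero] at hd; exact hd rfl)
        · exact hh' i d h1)
      (fun d hd => by
        rw [map_sub] at hd
        by_cases h1 : MvPowerSeries.coeff d r' = 0
        · exact hRsupp d (by intro h2; rw [h1, h2, sub_zero] at hd; exact hd rfl)
        · exact hr' d h1)
      heq0
    have hhs : h' = Hs := by
      funext i
      refine MvPowerSeries.ext fun e => ?_
      have := (hz (e + inclU (α i))).2 i e rfl
      rw [map_sub] at this
      exact sub_eq_zero.mp this
    have hrs : r' = Rs := by
      refine MvPowerSeries.ext fun d => ?_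
      have := (hz d).1
      rw [map_sub] at this
      exact sub_eq_zero.mp this
    rw [Prod.ext_iff]
    exact ⟨hhs, hrs⟩
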